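/- Let (a,b) ∈ Σ and put ψ = ψ_{a,b} and let * be the operation of Q_{a,b}. Then: (1) a pair (u,v) ∈ F_q² fulfils the Associativity Equation ψ(ψ(u)−v) = ψ(−v) + ψ(u−v−ψ(−v)) if and only if v*(0*u) = (v*0)*u; (2) u − v − ψ(−v) = u − (v*0) and ψ(u) − v = (0*u) − v; (3) if (u,v) ≠ (0,0) fulfils the Associativity Equation, then none of u, v, u−v−ψ(−v) and ψ(u)−v is zero, and (c²u, c²v) fulfils the Associativity Equation for every c ∈ F_q; and (4) the quasigroup Q_{a,b} is maximally nonassociative if and only if (u,v) = (0,0) is the only solution of the Associativity Equation. -/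

import Mathlib

open scoped Classical

noncomputable section

/-- The operation of the quasigroup `Q_{a,b}`:
`u*v = u + a(v-u)` if `v-u` is a square, `u*v = u + b(v-u)` otherwise. -/
def qop {F : Type*} [Field F] (a b u v : F) : F :=
  if IsSquare (v - u) then u + a * (v - u) else u + b * (v - u)

/-- The set `Σ(F)` of pairs `(a,b)` with `a ≠ b`, `a,b ∉ {0,1}`, and
`ab` and `(1-a)(1-b)` both squares. -/
def SigSet (F : Type*) [Field F] : Set (F × F) :=
  {p | p.1 ≠ p.2 ∧ p.1 ≠ 0 ∧ p.1 ≠ 1 ∧ p.2 ≠ 0 ∧ p.2 ≠ 1 ∧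
    IsSquare (p.1 * p.2) ∧ IsSquare ((1 - p.1) * (1 - p.2))}

/-- `Q_{a,b}` is maximally nonassociative. -/
def MaxNA {F : Type*} [Field F] (a b : F) : Prop :=
  ∀ u v w : F, qop a b (qop a b u v) w = qop a b u (qop a b v w) → u = v ∧ v = w

/-- `σ(q)`: the number of pairs `(a,b) ∈ Σ` for which `Q_{a,b}` is
maximally nonassociative. -/
def sigmaCount (F : Type*) [Field F] : ℕ :=
  Set.ncard {p : F × F | p ∈ SigSet F ∧ MaxNA p.1 p.2}

/-- The quadratic orthomorphism `ψ_{a,b}`. -/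
def psiOrtho {F : Type*} [Field F] (a b u : F) : F :=
  if IsSquare u then a * u else b * u

/-- The Associativity Equation `ψ(ψ(u)-v) = ψ(-v) + ψ(u-v-ψ(-v))`. -/
def AssocEq {F : Type*} [Field F] (a b u v : F) : Prop :=
  psiOrtho a b (psiOrtho a b u - v) =
    psiOrtho a b (-v) + psiOrtho a b (u - v - psiOrtho a b (-v))

namespace AuxNA

variable {F : Type*} [Field F]

lemma sq_mul_iff [Fintype F] {x y : F} (hx : x ≠ 0) (hy : y ≠ 0) :
    IsSquare (x * y) ↔ (IsSquare x ↔ IsSquare y) := by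
  have hxy : x * y ≠ 0 := mul_ne_zero hx hy
  rw [← quadraticChar_one_iff_isSquare hxy, ← quadraticChar_one_iff_isSquare hx,
    ← quadraticChar_one_iff_isSquare hy, map_mul]
  rcases quadraticChar_dichotomy hx with h1 | h1 <;>
    rcases quadraticChar_dichotomy hy with h2 | h2 <;> rw [h1, h2] <;> norm_num

lemma psi_eq (a b u : F) : psiOrtho a b u = (if IsSquare u then a else b) * u := by
  unfold psiOrtho; split_ifs <;> rfl

lemma psi_zero (a b : F) : psiOrtho a b 0 = 0 := by simp [psiOrtho]

lemma qop_eq (a b u v : F) : qop a b u v = u + psiOrtho a b (v - u) := by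
  unfold qop psiOrtho; split_ifs <;> ring

lemma qop_shift (a b x y t : F) : qop a b (x - t) (y - t) = qop a b x y - t := by
  rw [qop_eq, qop_eq, show y - t - (x - t) = y - x from by ring]; ring

lemma psi_zero_iff {a b : F} (ha0 : a ≠ 0) (hb0 : b ≠ 0) {x : F} (h : psiOrtho a b x = 0) :
    x = 0 := by
  rw [psi_eq] at h
  rcases mul_eq_zero.mp h with h | h
  · split_ifs at h <;> [exact absurd h ha0; exact absurd h hb0]
  · exact h

lemma gen_inj [Fintype F] {c d px py x y : F} (hc : c ≠ 0) (hd : d ≠ 0)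
    (hcd : IsSquare c ↔ IsSquare d)
    (hpxa : IsSquare x → px = c) (hpxb : ¬IsSquare x → px = d)
    (hpya : IsSquare y → py = c) (hpyb : ¬IsSquare y → py = d)
    (h : px * x = py * y) : x = y := by
  by_cases hx : IsSquare x <;> by_cases hy : IsSquare y
  · rw [hpxa hx, hpya hy] at h; exact mul_left_cancel₀ hc h
  · rw [hpxa hx, hpyb hy] at h
    have hy0 : y ≠ 0 := fun h0 => hy (h0 ▸ IsSquare.zero)
    have hx0 : x ≠ 0 := by
      rintro rfl
      rw [mul_zero] at h
      exact hy0 (by simpa [hd] using mul_eq_zero.mp h.symm)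
    have h1 := sq_mul_iff hc hx0
    have h2 := sq_mul_iff hd hy0
    rw [h] at h1
    have h3 : (IsSquare c ↔ IsSquare x) ↔ (IsSquare d ↔ IsSquare y) := h1.symm.trans h2
    by_cases hc' : IsSquare c
    · exact absurd ((h3.mp (iff_of_true hc' hx)).mp (hcd.mp hc')) hy
    · exact absurd ((h3.mpr (iff_of_false (fun hs => hc' (hcd.mpr hs)) hy)).mpr hx) hc'
  · rw [hpxb hx, hpya hy] at h
    have hx0 : x ≠ 0 := fun h0 => hx (h0 ▸ IsSquare.zero)
    have hy0 : y ≠ 0 := by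
      rintro rfl
      rw [mul_zero] at h
      exact hx0 (by simpa [hd] using mul_eq_zero.mp h)
    have h1 := sq_mul_iff hd hx0
    have h2 := sq_mul_iff hc hy0
    rw [h] at h1
    have h3 : (IsSquare d ↔ IsSquare x) ↔ (IsSquare c ↔ IsSquare y) := h1.symm.trans h2
    by_cases hc' : IsSquare c
    · exact absurd ((h3.mpr (iff_of_true hc' hy)).mp (hcd.mp hc')) hx
    · exact absurd ((h3.mp (iff_of_false (fun hs => hc' (hcd.mpr hs)) hx)).mpr hy) hc'
  · rw [hpxb hx, hpyb hy] at h; exact mul_left_cancel₀ hd h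

lemma psi_cases (a b u : F) : ∃ p : F, psiOrtho a b u = p * u ∧
    (IsSquare u → p = a) ∧ (¬IsSquare u → p = b) ∧ (p = a ∨ p = b) := by
  by_cases h : IsSquare u
  · exact ⟨a, by rw [psiOrtho, if_pos h], fun _ => rfl, fun hc => absurd h hc, Or.inl rfl⟩
  · exact ⟨b, by rw [psiOrtho, if_neg h], fun hc => absurd hc h, fun _ => rfl, Or.inr rfl⟩

lemma psi_homog (a b c x : F) : psiOrtho a b (c ^ 2 * x) = c ^ 2 * psiOrtho a b x := by
  by_cases hc : c = 0
  · simp [hc, psi_zero]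
  · have hiff : IsSquare (c ^ 2 * x) ↔ IsSquare x := by
      constructor
      · rintro ⟨r, hr⟩
        exact ⟨c⁻¹ * r, by field_simp at hr ⊢; linear_combination hr⟩
      · rintro ⟨r, hr⟩
        exact ⟨c * r, by rw [hr]; ring⟩
    simp only [psi_eq, hiff]; ring

end AuxNA

namespace AuxNA
variable {F : Type*} [Field F]

lemma iff_contra {P Q K : Prop} (h1 : P ↔ (Q ↔ K)) (h2 : P ↔ Q) (h3 : ¬K) : False := by
  tauto

lemma core [Fintype F] {a b p q r u : F}
    (ha0 : a ≠ 0) (hb0 : b ≠ 0) (ha1 : a ≠ 1) (hb1 : b ≠ 1)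
    (heps : IsSquare a ↔ IsSquare b) (hdel : IsSquare (1 - a) ↔ IsSquare (1 - b))
    (hu : u ≠ 0)
    (hpa : IsSquare u → p = a) (hpb : ¬IsSquare u → p = b)
    (hq : q = a ∨ q = b)
    (hra : IsSquare ((1 - p + q * p) * u) → r = a)
    (hrb : ¬IsSquare ((1 - p + q * p) * u) → r = b)
    (hk : 1 - p + q * p ≠ 0)
    (key : r * (1 - p + q * p) = q * p) : False := by
  have h1a : (1 : F) - a ≠ 0 := sub_ne_zero.mpr (Ne.symm ha1)
  have h1b : (1 : F) - b ≠ 0 := sub_ne_zero.mpr (Ne.symm hb1)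
  by_cases hSu : IsSquare u
  · have hp := hpa hSu
    rcases hq with hq | hq <;> rw [hp, hq] at key hk hra hrb
    · by_cases hSW : IsSquare ((1 - a + a * a) * u)
      · -- (a,a,a)
        rw [hra hSW] at key
        exact mul_ne_zero (mul_ne_zero ha0 h1a) h1a (by linear_combination key)
      · -- (a,a,b)
        rw [hrb hSW] at key
        have hknsq : ¬IsSquare (1 - a + a * a) := fun h =>
          hSW ((sq_mul_iff hk hu).mpr (iff_of_true h hSu))
        have h1b' : (1 - b) * (1 - a + a * a) = 1 - a := by linear_combination -key
        have hth := sq_mul_iff h1b hk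
        rw [h1b'] at hth
        exact iff_contra hth hdel hknsq
    · by_cases hSW : IsSquare ((1 - a + b * a) * u)
      · -- (a,b,a)
        rw [hra hSW] at key
        exact mul_ne_zero (mul_ne_zero ha0 h1a) h1b (by linear_combination key)
      · -- (a,b,b)
        rw [hrb hSW] at key
        have hk2 : 1 - a + b * a = a := mul_left_cancel₀ hb0 key
        rw [hk2] at hSW
        have hansq : ¬IsSquare a := fun h =>
          hSW ((sq_mul_iff ha0 hu).mpr (iff_of_true h hSu))
        have h1b' : (1 - b) * a = 1 - a := by linear_combination -hk2
        have hth := sq_mul_iff h1b ha0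
        rw [h1b'] at hth
        exact iff_contra hth hdel hansq
  · have hp := hpb hSu
    rcases hq with hq | hq <;> rw [hp, hq] at key hk hra hrb
    · by_cases hSW : IsSquare ((1 - b + a * b) * u)
      · -- (b,a,a)
        rw [hra hSW] at key
        have hk2 : 1 - b + a * b = b := mul_left_cancel₀ ha0 key
        rw [hk2] at hSW
        have hbnsq : ¬IsSquare b := fun h =>
          hSu (((sq_mul_iff hb0 hu).mp hSW).mp h)
        have h1a' : (1 - a) * b = 1 - b := by linear_combination -hk2
        have hth := sq_mul_iff h1a hb0
        rw [h1a'] at hth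
        exact iff_contra hth hdel.symm hbnsq
      · -- (b,a,b)
        rw [hrb hSW] at key
        exact mul_ne_zero (mul_ne_zero hb0 h1a) h1b (by linear_combination key)
    · by_cases hSW : IsSquare ((1 - b + b * b) * u)
      · -- (b,b,a)
        rw [hra hSW] at key
        have hknsq : ¬IsSquare (1 - b + b * b) := fun h =>
          hSu (((sq_mul_iff hk hu).mp hSW).mp h)
        have h1a' : (1 - a) * (1 - b + b * b) = 1 - b := by linear_combination -key
        have hth := sq_mul_iff h1a hk
        rw [h1a'] at hth
        exact iff_contra hth hdel.symm hknsq
      · -- (b,b,b)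
        rw [hrb hSW] at key
        exact mul_ne_zero (mul_ne_zero hb0 h1b) h1b (by linear_combination key)

end AuxNA


/-- Proposition 1.4: properties of the Associativity Equation for `(a,b) ∈ Σ`. -/
theorem assocEq_properties (F : Type*) [Field F] [Fintype F]
    (hodd : Odd (Fintype.card F)) (a b : F) (hab : (a, b) ∈ SigSet F) :
    (∀ u v : F, AssocEq a b u v ↔
      qop a b v (qop a b 0 u) = qop a b (qop a b v 0) u) ∧
    (∀ u v : F, u - v - psiOrtho a b (-v) = u - qop a b v 0 ∧
      psiOrtho a b u - v = qop a b 0 u - v) ∧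
    (∀ u v : F, (u, v) ≠ (0, 0) → AssocEq a b u v →
      (u ≠ 0 ∧ v ≠ 0 ∧ u - v - psiOrtho a b (-v) ≠ 0 ∧ psiOrtho a b u - v ≠ 0) ∧
      ∀ c : F, AssocEq a b (c ^ 2 * u) (c ^ 2 * v)) ∧
    (MaxNA a b ↔ ∀ u v : F, AssocEq a b u v → u = 0 ∧ v = 0) := by

  obtain ⟨hne, ha0, ha1, hb0, hb1, habsq, hab1sq⟩ := hab
  have heps : IsSquare a ↔ IsSquare b := (AuxNA.sq_mul_iff ha0 hb0).mp habsq
  have h1a : (1 : F) - a ≠ 0 := sub_ne_zero.mpr (Ne.symm ha1)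
  have h1b : (1 : F) - b ≠ 0 := sub_ne_zero.mpr (Ne.symm hb1)
  have hdel : IsSquare (1 - a) ↔ IsSquare (1 - b) := (AuxNA.sq_mul_iff h1a h1b).mp hab1sq
  have ha1' : a - 1 ≠ 0 := sub_ne_zero.mpr ha1
  have hb1' : b - 1 ≠ 0 := sub_ne_zero.mpr hb1
  have hdel' : IsSquare (a - 1) ↔ IsSquare (b - 1) := by
    refine (AuxNA.sq_mul_iff ha1' hb1').mp ?_
    rw [show (a - 1) * (b - 1) = (1 - a) * (1 - b) from by ring]
    exact hab1sq
  have hinj : ∀ x y : F, psiOrtho a b x = psiOrtho a b y → x = y := by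
    intro x y h
    obtain ⟨px, hpx, hpxa, hpxb, -⟩ := AuxNA.psi_cases a b x
    obtain ⟨py, hpy, hpya, hpyb, -⟩ := AuxNA.psi_cases a b y
    rw [hpx, hpy] at h
    exact AuxNA.gen_inj ha0 hb0 heps hpxa hpxb hpya hpyb h
  have hinj2 : ∀ x y : F, psiOrtho a b x - x = psiOrtho a b y - y → x = y := by
    intro x y h
    obtain ⟨px, hpx, hpxa, hpxb, -⟩ := AuxNA.psi_cases a b x
    obtain ⟨py, hpy, hpya, hpyb, -⟩ := AuxNA.psi_cases a b y
    rw [hpx, hpy] at h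
    have h' : (px - 1) * x = (py - 1) * y := by linear_combination h
    exact AuxNA.gen_inj ha1' hb1' hdel'
      (fun hs => by rw [hpxa hs]) (fun hs => by rw [hpxb hs])
      (fun hs => by rw [hpya hs]) (fun hs => by rw [hpyb hs]) h'
  have hpart1 : ∀ u v : F, AssocEq a b u v ↔
      qop a b v (qop a b 0 u) = qop a b (qop a b v 0) u := by
    intro u v
    unfold AssocEq
    simp only [AuxNA.qop_eq, sub_zero, zero_add, zero_sub]
    rw [show u - (v + psiOrtho a b (-v)) = u - v - psiOrtho a b (-v) from by ring]
    constructor <;> intro h <;> linear_combination h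
  have hpart3 : ∀ u v : F, (u, v) ≠ (0, 0) → AssocEq a b u v →
      (u ≠ 0 ∧ v ≠ 0 ∧ u - v - psiOrtho a b (-v) ≠ 0 ∧ psiOrtho a b u - v ≠ 0) ∧
      ∀ c : F, AssocEq a b (c ^ 2 * u) (c ^ 2 * v) := by
    intro u v hne0 hE
    have hu : u ≠ 0 := by
      intro h0; subst h0
      unfold AssocEq at hE
      rw [AuxNA.psi_zero, zero_sub] at hE
      have h1 : psiOrtho a b (-v - psiOrtho a b (-v)) = 0 := by linear_combination -hE
      have h2 := AuxNA.psi_zero_iff ha0 hb0 h1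
      have h3 : psiOrtho a b (-v) - (-v) = psiOrtho a b 0 - 0 := by
        rw [AuxNA.psi_zero]; linear_combination -h2
      have h4 := hinj2 _ _ h3
      exact hne0 (by rw [neg_eq_zero.mp h4])
    have hv : v ≠ 0 := by
      intro h0; subst h0
      unfold AssocEq at hE
      simp only [neg_zero, AuxNA.psi_zero, sub_zero, zero_add] at hE
      have h1 := hinj _ _ hE
      have h2 : psiOrtho a b u - u = psiOrtho a b 0 - 0 := by
        rw [AuxNA.psi_zero]; linear_combination h1
      exact hne0 (by rw [hinj2 _ _ h2])
    have hw : u - v - psiOrtho a b (-v) ≠ 0 := by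
      intro h0
      unfold AssocEq at hE
      rw [h0, AuxNA.psi_zero, add_zero] at hE
      have h1 := hinj _ _ hE
      have h2 : psiOrtho a b u = 0 := by linear_combination h1
      exact hu (AuxNA.psi_zero_iff ha0 hb0 h2)
    have hx : psiOrtho a b u - v ≠ 0 := by
      intro h0
      have hvu : v = psiOrtho a b u := (sub_eq_zero.mp h0).symm
      unfold AssocEq at hE
      rw [h0, AuxNA.psi_zero] at hE
      obtain ⟨p, hpe, hpa, hpb, -⟩ := AuxNA.psi_cases a b u
      obtain ⟨q, hqe, -, -, hqab⟩ := AuxNA.psi_cases a b (-v)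
      obtain ⟨r, hre, hrca, hrcb, -⟩ := AuxNA.psi_cases a b (u - v - psiOrtho a b (-v))
      have hWk : u - v - psiOrtho a b (-v) = (1 - p + q * p) * u := by
        rw [hqe, hvu, hpe]; ring
      have key : r * (1 - p + q * p) = q * p := by
        apply mul_right_cancel₀ hu
        have hE' : (0 : F) = q * (-v) + r * ((1 - p + q * p) * u) := by
          rw [← hWk, ← hre, ← hqe]; exact hE
        rw [hvu, hpe] at hE'
        linear_combination -hE'
      have hk : 1 - p + q * p ≠ 0 := by
        intro h00; exact hw (by rw [hWk, h00, zero_mul])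
      exact AuxNA.core ha0 hb0 ha1 hb1 heps hdel hu
        hpa hpb hqab
        (fun h => hrca (by rw [hWk]; exact h))
        (fun h => hrcb (fun hc => h (by rw [← hWk]; exact hc)))
        hk key
    refine ⟨⟨hu, hv, hw, hx⟩, fun c => ?_⟩
    unfold AssocEq at hE ⊢
    rw [AuxNA.psi_homog a b c u,
        show c ^ 2 * psiOrtho a b u - c ^ 2 * v = c ^ 2 * (psiOrtho a b u - v) from by ring,
        AuxNA.psi_homog,
        show -(c ^ 2 * v) = c ^ 2 * (-v) from by ring, AuxNA.psi_homog,
        show c ^ 2 * u - c ^ 2 * v - c ^ 2 * psiOrtho a b (-v) =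
          c ^ 2 * (u - v - psiOrtho a b (-v)) from by ring,
        AuxNA.psi_homog]
    linear_combination c ^ 2 * hE
  refine ⟨hpart1, ?_, hpart3, ?_⟩
  · intro u v
    constructor <;> simp only [AuxNA.qop_eq, sub_zero, zero_add, zero_sub] <;> ring
  · constructor
    · intro hM u v hE
      have h1 := (hpart1 u v).mp hE
      obtain ⟨h2, h3⟩ := hM v 0 u h1.symm
      exact ⟨h3.symm, h2⟩
    · intro hO u v w hass
      have hsh := AuxNA.qop_shift (F := F) a b
      have e1 : qop a b 0 (w - v) = qop a b v w - v := by
        have h := hsh v w v; rwa [sub_self] at h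
      have e2 : qop a b u v - v = qop a b (u - v) 0 := by
        have h := hsh u v v; rw [sub_self] at h; exact h.symm
      have hAE : AssocEq a b (w - v) (u - v) := by
        rw [hpart1]
        calc qop a b (u - v) (qop a b 0 (w - v))
            = qop a b (u - v) (qop a b v w - v) := by rw [e1]
          _ = qop a b u (qop a b v w) - v := hsh u (qop a b v w) v
          _ = qop a b (qop a b u v) w - v := by rw [hass]
          _ = qop a b (qop a b u v - v) (w - v) := (hsh (qop a b u v) w v).symm
          _ = qop a b (qop a b (u - v) 0) (w - v) := by rw [e2]
      obtain ⟨h1, h2⟩ := hO (w - v) (u - v) hAE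
      exact ⟨sub_eq_zero.mp h2, (sub_eq_zero.mp h1).symm⟩
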